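/- Let λ₁, λ₂ > 0 and c > 0, and let R₁, R₂ be as in the context. Then for every r ≥ 0, ℙ( R₂ > r and c R₂ ≤ R₁ ) = ∫_{r}^{∞} 2 λ₂ · exp( −2 λ₂ t − π λ₁ c² t² ) dt. Consequently, conditioned on the event 𝓔₂ = {c R₂ ≤ R₁}, the serving distance R = R₂ has probability density f_R(r | 𝓔₂) = 2 λ₂ · exp(−2 λ₂ r − π λ₁ c² r²) / ℙ(𝓔₂). -/

import Mathlib

open MeasureTheory Real ProbabilityTheory

lemma aux_exp_integral {b : ℝ} (hb : 0 < b) (u : ℝ) :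
    ∫ t in Set.Ioi u, b * Real.exp (-(b * t)) = Real.exp (-(b * u)) := by
  have hderiv : ∀ x ∈ Set.Ici u, HasDerivAt (fun t => -Real.exp (-(b * t)))
      (b * Real.exp (-(b * x))) x := by
    intro x _
    have h1 : HasDerivAt (fun t : ℝ => -(b * t)) (-b) x := by
      simpa using ((hasDerivAt_id x).const_mul b).fun_neg
    have := h1.exp.fun_neg
    simpa [mul_comm] using this
  have hint : IntegrableOn (fun t => b * Real.exp (-(b * t))) (Set.Ioi u) := by
    have := (exp_neg_integrableOn_Ioi u hb).const_mul b
    simpa [neg_mul, IntegrableOn] using this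
  have htend : Filter.Tendsto (fun t => -Real.exp (-(b * t))) Filter.atTop (nhds 0) := by
    rw [show (0:ℝ) = -0 by ring]
    refine Filter.Tendsto.neg ?_
    refine Real.tendsto_exp_atBot.comp ?_
    have : Filter.Tendsto (fun x : ℝ => -b * x) Filter.atTop Filter.atBot :=
      Filter.tendsto_id.const_mul_atTop_of_neg (by linarith)
    simpa [neg_mul] using this
  have := integral_Ioi_of_hasDerivAt_of_tendsto' hderiv hint htend
  simpa using this

lemma aux_integrable {b a : ℝ} (hb : 0 < b) (ha : 0 ≤ a) (u : ℝ) :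
    IntegrableOn (fun t => b * Real.exp (-(b * t) - a * t ^ 2)) (Set.Ioi u) := by
  have hint : IntegrableOn (fun t => b * Real.exp (-(b * t))) (Set.Ioi u) := by
    have := (exp_neg_integrableOn_Ioi u hb).const_mul b
    simpa [neg_mul, IntegrableOn] using this
  refine hint.mono' ?_ ?_
  · exact (Continuous.mul continuous_const
      (Real.continuous_exp.comp (by continuity))).aestronglyMeasurable
  · refine Filter.Eventually.of_forall fun t => ?_
    rw [Real.norm_eq_abs, abs_of_nonneg (by positivity)]
    have : Real.exp (-(b * t) - a * t ^ 2) ≤ Real.exp (-(b * t)) :=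
      Real.exp_le_exp.mpr (by nlinarith [sq_nonneg t])
    nlinarith [Real.exp_pos (-(b*t)), Real.exp_pos (-(b*t) - a*t^2)]

/-- Serving distance distribution conditioned on association with a tier 2 node: if `R₁, R₂`
are independent nonnegative random variables with `ℙ(R₁ > r) = exp(−π λ₁ r²)` and
`ℙ(R₂ > r) = exp(−2 λ₂ r)` for `r ≥ 0`, then for every `r ≥ 0`,
`ℙ(R₂ > r ∧ c R₂ ≤ R₁) = ∫_r^∞ 2 λ₂ e^{−2 λ₂ t − π λ₁ c² t²} dt`; i.e. conditioned on the
event `𝓔₂ = {c R₂ ≤ R₁}`, the serving distance `R₂` has density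
`2 λ₂ e^{−2 λ₂ r − π λ₁ c² r²}/ℙ(𝓔₂)`. -/
theorem serving_distance_density_tier_two {Ω : Type*} [MeasurableSpace Ω]
    (P : Measure Ω) [IsProbabilityMeasure P]
    (R₁ R₂ : Ω → ℝ) (hR₁ : Measurable R₁) (hR₂ : Measurable R₂)
    (hindep : IndepFun R₁ R₂ P)
    (hR₁_nonneg : ∀ ω, 0 ≤ R₁ ω) (hR₂_nonneg : ∀ ω, 0 ≤ R₂ ω)
    (lam₁ lam₂ c : ℝ) (hlam₁ : 0 < lam₁) (hlam₂ : 0 < lam₂) (hc : 0 < c)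
    (hsurv₁ : ∀ r : ℝ, 0 ≤ r →
      P {ω | r < R₁ ω} = ENNReal.ofReal (Real.exp (-(π * lam₁ * r ^ 2))))
    (hsurv₂ : ∀ r : ℝ, 0 ≤ r →
      P {ω | r < R₂ ω} = ENNReal.ofReal (Real.exp (-(2 * lam₂ * r)))) :
    ∀ r : ℝ, 0 ≤ r →
      P {ω | r < R₂ ω ∧ c * R₂ ω ≤ R₁ ω}
        = ENNReal.ofReal (∫ t in Set.Ioi r,
            2 * lam₂ * Real.exp (-(2 * lam₂ * t) - π * lam₁ * c ^ 2 * t ^ 2)) := by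
  intro r hr
  set b := 2 * lam₂ with hb_def
  set a := π * lam₁ * c ^ 2 with ha_def
  have hb : 0 < b := by positivity
  have ha : 0 < a := by rw [ha_def]; positivity
  set μ₁ := P.map R₁ with hμ₁def
  set μ₂ := P.map R₂ with hμ₂def
  haveI : IsProbabilityMeasure μ₁ := Measure.isProbabilityMeasure_map hR₁.aemeasurable
  haveI : IsProbabilityMeasure μ₂ := Measure.isProbabilityMeasure_map hR₂.aemeasurable
  -- survival function of μ₁
  have hμ₁Ioi : ∀ x : ℝ, 0 ≤ x →
      μ₁ (Set.Ioi x) = ENNReal.ofReal (Real.exp (-(π * lam₁ * x ^ 2))) := by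
    intro x hx
    rw [hμ₁def, Measure.map_apply hR₁ measurableSet_Ioi]
    exact hsurv₁ x hx
  have hμ₁Ici : ∀ x : ℝ, 0 < x →
      μ₁ (Set.Ici x) = ENNReal.ofReal (Real.exp (-(π * lam₁ * x ^ 2))) := by
    intro x hx
    refine le_antisymm ?_ ?_
    · have htend : Filter.Tendsto (fun y : ℝ => ENNReal.ofReal (Real.exp (-(π * lam₁ * y ^ 2))))
          (nhdsWithin x (Set.Iio x)) (nhds (ENNReal.ofReal (Real.exp (-(π * lam₁ * x ^ 2))))) :=
        ((ENNReal.continuous_ofReal.comp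
          (Real.continuous_exp.comp (by continuity))).tendsto x).mono_left
          nhdsWithin_le_nhds
      have hev : ∀ᶠ y in nhdsWithin x (Set.Iio x),
          μ₁ (Set.Ici x) ≤ ENNReal.ofReal (Real.exp (-(π * lam₁ * y ^ 2))) := by
        filter_upwards [Ioo_mem_nhdsLT_of_mem (Set.mem_Ioc.mpr ⟨hx, le_refl x⟩)] with y hy
        calc μ₁ (Set.Ici x) ≤ μ₁ (Set.Ioi y) :=
              measure_mono (fun z hz => lt_of_lt_of_le hy.2 hz)
          _ = _ := hμ₁Ioi y hy.1.le
      exact ge_of_tendsto htend hev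
    · rw [← hμ₁Ioi x hx.le]; exact measure_mono Set.Ioi_subset_Ici_self
  -- survival function of μ₂
  have hμ₂Ioi : ∀ t : ℝ, μ₂ (Set.Ioi t) = ENNReal.ofReal (Real.exp (-(b * max t 0))) := by
    intro t
    rcases le_or_gt 0 t with ht | ht
    · rw [hμ₂def, Measure.map_apply hR₂ measurableSet_Ioi, max_eq_left ht]
      exact hsurv₂ t ht
    · rw [max_eq_right ht.le, hμ₂def, Measure.map_apply hR₂ measurableSet_Ioi]
      have huniv : R₂ ⁻¹' Set.Ioi t = Set.univ := by
        ext ω; simp [Set.mem_Ioi, lt_of_lt_of_le ht (hR₂_nonneg ω)]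
      rw [huniv]
      simp
  -- the density measure
  set d : ℝ → ENNReal :=
    Set.indicator (Set.Ici 0) (fun s => ENNReal.ofReal (b * Real.exp (-(b * s)))) with hd_def
  have hd_meas : Measurable d := by
    refine Measurable.indicator ?_ measurableSet_Ici
    exact ((measurable_const.mul
      (Real.measurable_exp.comp (measurable_const.mul measurable_id).neg))).ennreal_ofReal
  set ν := volume.withDensity d with hνdef
  have hν_Ioi : ∀ t : ℝ, ν (Set.Ioi t) = ENNReal.ofReal (Real.exp (-(b * max t 0))) := by
    intro t
    have hint : IntegrableOn (fun s => b * Real.exp (-(b * s))) (Set.Ioi (max t 0)) := by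
      have := (exp_neg_integrableOn_Ioi (max t 0) hb).const_mul b
      simpa [neg_mul, IntegrableOn] using this
    rw [hνdef, withDensity_apply _ measurableSet_Ioi, hd_def,
      lintegral_indicator measurableSet_Ici, Measure.restrict_restrict measurableSet_Ici]
    have hsets : (Set.Ici (0:ℝ) ∩ Set.Ioi t : Set ℝ) =ᵐ[volume] Set.Ioi (max t 0) := by
      rcases le_or_gt 0 t with ht | ht
      · have h1 : (Set.Ici (0:ℝ) ∩ Set.Ioi t : Set ℝ) = Set.Ioi t := by
          ext s
          simp only [Set.mem_inter_iff, Set.mem_Ici, Set.mem_Ioi]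
          exact ⟨fun h => h.2, fun h => ⟨le_trans ht h.le, h⟩⟩
        rw [max_eq_left ht, h1]; exact Filter.EventuallyEq.rfl
      · rw [max_eq_right ht.le]
        have h2 : (Set.Ici (0:ℝ) ∩ Set.Ioi t : Set ℝ) = Set.Ici 0 := by
          ext s
          simp only [Set.mem_inter_iff, Set.mem_Ici, Set.mem_Ioi]
          exact ⟨fun h => h.1, fun h => ⟨h, lt_of_lt_of_le ht h⟩⟩
        rw [h2]
        exact (Ioi_ae_eq_Ici (a := (0:ℝ))).symm
    rw [setLIntegral_congr hsets,
      ← ofReal_integral_eq_lintegral_ofReal hint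
        (Filter.Eventually.of_forall fun s => by positivity),
      aux_exp_integral hb (max t 0)]
  -- μ₂ equals the density measure
  have hIoc : ∀ (m : Measure ℝ),
      (∀ t : ℝ, m (Set.Ioi t) = ENNReal.ofReal (Real.exp (-(b * max t 0)))) →
      ∀ u v : ℝ, u < v → m (Set.Ioc u v)
        = ENNReal.ofReal (Real.exp (-(b * max u 0)))
          - ENNReal.ofReal (Real.exp (-(b * max v 0))) := by
    intro m hm u v huv
    rw [← Set.Ioi_diff_Ioi, measure_diff (Set.Ioi_subset_Ioi huv.le)
      measurableSet_Ioi.nullMeasurableSet (by rw [hm]; exact ENNReal.ofReal_ne_top),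
      hm, hm]
  have hμ₂ν : μ₂ = ν := by
    refine MeasureTheory.Measure.ext_of_Ioc μ₂ ν fun u v huv => ?_
    rw [hIoc μ₂ hμ₂Ioi u v huv, hIoc ν hν_Ioi u v huv]
  -- Fubini for the joint event
  have hjoint : P.map (fun ω => (R₂ ω, R₁ ω)) = μ₂.prod μ₁ :=
    (indepFun_iff_map_prod_eq_prod_map_map hR₂.aemeasurable hR₁.aemeasurable).mp hindep.symm
  set S : Set (ℝ × ℝ) := {p | r < p.1 ∧ c * p.1 ≤ p.2} with hSdef
  have hS : MeasurableSet S :=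
    (measurableSet_lt measurable_const measurable_fst).inter
      (measurableSet_le (measurable_fst.const_mul c) measurable_snd)
  have hstep1 : P {ω | r < R₂ ω ∧ c * R₂ ω ≤ R₁ ω} = (μ₂.prod μ₁) S := by
    rw [← hjoint, Measure.map_apply (hR₂.prodMk hR₁) hS]
    rfl
  rw [hstep1, Measure.prod_apply hS]
  have hslice : ∀ y : ℝ, μ₁ (Prod.mk y ⁻¹' S)
      = Set.indicator (Set.Ioi r) (fun y => ENNReal.ofReal (Real.exp (-(a * y ^ 2)))) y := by
    intro y
    rcases lt_or_ge r y with hy | hy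
    · have hset : Prod.mk y ⁻¹' S = Set.Ici (c * y) := by
        ext x; simp [hSdef, hy, Set.mem_Ici]
      rw [hset, Set.indicator_of_mem (Set.mem_Ioi.mpr hy)]
      have hcy : 0 < c * y := mul_pos hc (lt_of_le_of_lt hr hy)
      rw [hμ₁Ici (c * y) hcy]
      congr 2
      rw [ha_def]; ring
    · have hset : Prod.mk y ⁻¹' S = ∅ := by
        ext x; simp [hSdef, not_lt.mpr hy]
      rw [hset, Set.indicator_of_notMem (by simpa using hy), measure_empty]
  rw [lintegral_congr hslice, lintegral_indicator measurableSet_Ioi, hμ₂ν, hνdef,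
    restrict_withDensity measurableSet_Ioi,
    lintegral_withDensity_eq_lintegral_mul _ hd_meas
      (show Measurable fun y : ℝ => ENNReal.ofReal (Real.exp (-(a * y ^ 2))) by fun_prop)]
  have hcongr : ∫⁻ y in Set.Ioi r,
      (d * fun y => ENNReal.ofReal (Real.exp (-(a * y ^ 2)))) y
      = ∫⁻ y in Set.Ioi r, ENNReal.ofReal (b * Real.exp (-(b * y) - a * y ^ 2)) := by
    refine setLIntegral_congr_fun measurableSet_Ioi
      (fun y hy => ?_)
    have hy0 : (0:ℝ) ≤ y := le_of_lt (lt_of_le_of_lt hr hy)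
    simp only [Pi.mul_apply, hd_def, Set.indicator_of_mem (Set.mem_Ici.mpr hy0)]
    rw [← ENNReal.ofReal_mul (by positivity)]
    congr 1
    rw [mul_assoc, ← Real.exp_add]
    ring_nf
  rw [hcongr, ← ofReal_integral_eq_lintegral_ofReal (aux_integrable hb ha.le r)
    (Filter.Eventually.of_forall fun y => by positivity)]
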